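/- The series ∑_{n=1}^∞ (−1)^{⌊n/2⌋}/(2n−1)^4 converges to √2 · 11π⁴/1536. -/

import Mathlib

open Real

private lemma bern4_eval (q : ℚ) :
    (Polynomial.map (algebraMap ℚ ℝ) (Polynomial.bernoulli 4)).eval ((q : ℝ)) =
      ((q : ℝ)^4 - 2*q^3 + q^2 - 1/30) := by
  rw [show ((q:ℝ)) = algebraMap ℚ ℝ q from rfl, Polynomial.eval_map, Polynomial.eval₂_at_apply]
  have h2 : _root_.bernoulli 2 = 1/6 := by
    rw [bernoulli_eq_bernoulli'_of_ne_one (by norm_num), bernoulli'_two]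
  have h3 : _root_.bernoulli 3 = 0 := by
    rw [bernoulli_eq_bernoulli'_of_ne_one (by norm_num), bernoulli'_three]
  have h4 : _root_.bernoulli 4 = -1/30 := by
    rw [bernoulli_eq_bernoulli'_of_ne_one (by norm_num), bernoulli'_four]
  have : (Polynomial.bernoulli 4).eval q = q^4 - 2*q^3 + q^2 - 1/30 := by
    simp [Polynomial.bernoulli_def, Finset.sum_range_succ, bernoulli_one, h2, h3, h4, Nat.choose]
    norm_num
    ring
  rw [this]
  push_cast
  norm_num

private lemma cos_odd (n : ℕ) :
    Real.cos (2 * π * ((2 * n + 1 : ℕ) : ℝ) * (1/8 : ℝ)) =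
      Real.sqrt 2 / 2 * (-1 : ℝ) ^ ((n + 1) / 2) := by
  obtain ⟨q, r, hr, rfl⟩ : ∃ q r, r < 4 ∧ n = 4 * q + r :=
    ⟨n / 4, n % 4, Nat.mod_lt _ (by norm_num), (Nat.div_add_mod n 4).symm⟩
  have harg : 2 * π * ((2 * (4 * q + r) + 1 : ℕ) : ℝ) * (1/8 : ℝ)
      = (2 * (r : ℝ) + 1) * π / 4 + q * (2 * π) := by push_cast; ring
  rw [harg, Real.cos_add_nat_mul_two_pi]
  have hexp : (4 * q + r + 1) / 2 = 2 * q + (r + 1) / 2 := by omega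
  rw [hexp, pow_add, pow_mul]
  norm_num
  interval_cases r
  · norm_num [show (2 * (0:ℝ) + 1) * π / 4 = π/4 by ring, Real.cos_pi_div_four]
  · rw [show (2 * ((1:ℕ):ℝ) + 1) * π / 4 = π - π/4 by push_cast; ring,
      Real.cos_pi_sub, Real.cos_pi_div_four]
    norm_num
  · rw [show (2 * ((2:ℕ):ℝ) + 1) * π / 4 = π + π/4 by push_cast; ring,
      Real.cos_add, Real.cos_pi, Real.sin_pi, Real.cos_pi_div_four]
    norm_num
  · rw [show (2 * ((3:ℕ):ℝ) + 1) * π / 4 = 2*π - π/4 by push_cast; ring,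
      Real.cos_two_pi_sub, Real.cos_pi_div_four]
    norm_num

theorem stmt_18 :
    HasSum (fun n : ℕ => (-1 : ℝ) ^ ((n + 1) / 2) / (2 * (n + 1 : ℝ) - 1) ^ 4)
      (Real.sqrt 2 * (11 * π ^ 4) / 1536) := by
  have hs2 : Real.sqrt 2 * Real.sqrt 2 = 2 := Real.mul_self_sqrt (by norm_num)
  set F : ℕ → ℝ := fun n => 1 / (n : ℝ) ^ (2 * 2) * Real.cos (2 * π * n * (1/8 : ℝ)) with hF
  have hA : HasSum F (1313 * π ^ 4 / 184320) := by
    have h := hasSum_one_div_nat_pow_mul_cos (k := 2) two_ne_zero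
      (x := (1:ℝ)/8) (by constructor <;> norm_num)
    have e1 : (Polynomial.map (algebraMap ℚ ℝ) (Polynomial.bernoulli (2*2))).eval ((1:ℝ)/8)
        = -1313/61440 := by
      rw [show ((1:ℝ)/8) = ((1/8 : ℚ) : ℝ) by norm_num, show 2*2 = 4 from rfl, bern4_eval]
      norm_num
    rw [e1] at h
    convert h using 1
    norm_num [Nat.factorial]
    ring
  have hB : HasSum (fun n : ℕ => 1 / (n : ℝ) ^ (2 * 2) * Real.cos (2 * π * n * (1/4 : ℝ)))
      (-(7 * π ^ 4) / 11520) := by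
    have h := hasSum_one_div_nat_pow_mul_cos (k := 2) two_ne_zero
      (x := (1:ℝ)/4) (by constructor <;> norm_num)
    have e1 : (Polynomial.map (algebraMap ℚ ℝ) (Polynomial.bernoulli (2*2))).eval ((1:ℝ)/4)
        = 7/3840 := by
      rw [show ((1:ℝ)/4) = ((1/4 : ℚ) : ℝ) by norm_num, show 2*2 = 4 from rfl, bern4_eval]
      norm_num
    rw [e1] at h
    convert h using 1
    norm_num [Nat.factorial]
    ring
  have hEven : HasSum (fun m => F (2 * m)) (-(7 * π ^ 4) / 11520 / 16) := by
    have h := hB.div_const 16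
    convert h using 1
    · rfl
    funext m
    simp only [hF]
    push_cast
    rw [show 2 * π * (2 * (m:ℝ)) * (1/8) = 2 * π * m * (1/4) by ring]
    ring
  have hOddS : Summable (fun m => F (2 * m + 1)) :=
    hA.summable.comp_injective (fun a b h => by omega)
  have htot : HasSum F (-(7 * π ^ 4) / 11520 / 16 + ∑' m, F (2 * m + 1)) :=
    hEven.even_add_odd hOddS.hasSum
  have hT : ∑' m, F (2 * m + 1) = 11 * π ^ 4 / 1536 := by
    have := hA.unique htot
    linarith
  have hOdd : HasSum (fun m => F (2 * m + 1)) (11 * π ^ 4 / 1536) := hT ▸ hOddS.hasSum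
  have hfin := hOdd.mul_left (Real.sqrt 2)
  convert hfin using 1
  · rfl
  · funext n
    simp only [hF]
    rw [cos_odd]
    push_cast
    rw [show 2 * ((n:ℝ) + 1) - 1 = 2 * n + 1 by ring]
    linear_combination (-((-1:ℝ) ^ ((n + 1) / 2) / (2 * (n:ℝ) + 1) ^ 4 / 2)) * hs2
  · ring
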